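/- The para-Hermitian group pH(W) (elements of O(W,g) commuting with F) acts transitively on the set of Dirac subspaces L of W with prescribed invariants k = dim(W₋ ∩ L) and r = rank(ω|_L). -/

import Mathlib

open Module Submodule

universe u v

private theorem exists_one {V₀ : Type*} [AddCommGroup V₀] [Module ℝ V₀]
    (B₀ : V₀ →ₗ[ℝ] V₀ →ₗ[ℝ] ℝ) (h : LinearMap.ker B₀ ≠ ⊤) : ∃ x y, B₀ x y = 1 := by
  have : ∃ x, B₀ x ≠ 0 := by
    by_contra hc
    push_neg at hc
    exact h (by ext v; simpa [LinearMap.mem_ker] using hc v)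
  obtain ⟨x, hx⟩ := this
  have : ∃ y, B₀ x y ≠ 0 := by
    by_contra hc
    push_neg at hc
    exact hx (by ext v; simpa using hc v)
  obtain ⟨y₀, hy₀⟩ := this
  exact ⟨x, (B₀ x y₀)⁻¹ • y₀, by simp [inv_mul_cancel₀ hy₀]⟩

section aux
variable {V₀ : Type*} [AddCommGroup V₀] [Module ℝ V₀]
  (B₀ : V₀ →ₗ[ℝ] V₀ →ₗ[ℝ] ℝ) (x y : V₀)

private theorem finrank_Cplane [FiniteDimensional ℝ V₀] (hskew : ∀ a b, B₀ a b = - B₀ b a)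
    (hxy : B₀ x y = 1) :
    finrank ℝ (LinearMap.ker (B₀ x) ⊓ LinearMap.ker (B₀ y) : Submodule ℝ V₀)
      = finrank ℝ V₀ - 2 := by
  have hxx : B₀ x x = 0 := by have := hskew x x; linarith
  have hyy : B₀ y y = 0 := by have := hskew y y; linarith
  have hyx : B₀ y x = -1 := by rw [hskew y x, hxy]
  have hC : (LinearMap.ker (B₀ x) ⊓ LinearMap.ker (B₀ y) : Submodule ℝ V₀)
      = LinearMap.ker ((B₀ x).prod (B₀ y)) := by
    ext v
    simp [LinearMap.mem_ker, Submodule.mem_inf, LinearMap.prod_apply, Prod.ext_iff]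
  have hsurj : LinearMap.range ((B₀ x).prod (B₀ y)) = ⊤ := by
    rw [eq_top_iff]
    rintro ⟨a, b⟩ -
    refine ⟨a • y - b • x, ?_⟩
    simp only [LinearMap.prod_apply, Function.prod, map_sub, map_smul, smul_eq_mul, Prod.mk.injEq]
    rw [hxy, hyx, hxx, hyy]
    simp [Prod.ext_iff]
  have hrn := LinearMap.finrank_range_add_finrank_ker ((B₀ x).prod (B₀ y))
  rw [hsurj, finrank_top] at hrn
  have h2 : finrank ℝ (ℝ × ℝ) = 2 := by simp
  rw [h2] at hrn
  rw [hC]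
  omega

private theorem ker_map_Cplane (hskew : ∀ a b, B₀ a b = - B₀ b a) (hxy : B₀ x y = 1) :
    (LinearMap.ker ((B₀.compl₁₂ (LinearMap.ker (B₀ x) ⊓ LinearMap.ker (B₀ y) : Submodule ℝ V₀).subtype
        (LinearMap.ker (B₀ x) ⊓ LinearMap.ker (B₀ y) : Submodule ℝ V₀).subtype))).map
        (LinearMap.ker (B₀ x) ⊓ LinearMap.ker (B₀ y) : Submodule ℝ V₀).subtype
      = LinearMap.ker B₀ := by
  have hxx : B₀ x x = 0 := by have := hskew x x; linarith
  have hyy : B₀ y y = 0 := by have := hskew y y; linarith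
  have hyx : B₀ y x = -1 := by rw [hskew y x, hxy]
  set C : Submodule ℝ V₀ := LinearMap.ker (B₀ x) ⊓ LinearMap.ker (B₀ y) with hCdef
  ext z
  simp only [Submodule.mem_map, LinearMap.mem_ker]
  constructor
  · rintro ⟨⟨z, hzC⟩, hz, rfl⟩
    obtain ⟨hzx, hzy⟩ : B₀ x z = 0 ∧ B₀ y z = 0 := by
      rw [hCdef, Submodule.mem_inf, LinearMap.mem_ker, LinearMap.mem_ker] at hzC
      exact hzC
    ext v
    have hπ : v - (B₀ x v) • y + (B₀ y v) • x ∈ C := by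
      rw [hCdef, Submodule.mem_inf, LinearMap.mem_ker, LinearMap.mem_ker]
      constructor
      · simp only [map_add, map_sub, map_smul, smul_eq_mul, hxy, hxx]; ring
      · simp only [map_add, map_sub, map_smul, smul_eq_mul, hyy, hyx]; ring
    have hz1 : B₀ z (v - (B₀ x v) • y + (B₀ y v) • x) = 0 := by
      have := LinearMap.congr_fun hz ⟨_, hπ⟩
      simpa [LinearMap.compl₁₂_apply] using this
    have hzx' : B₀ z x = 0 := by rw [hskew z x, hzx]; ring
    have hzy' : B₀ z y = 0 := by rw [hskew z y, hzy]; ring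
    simp only [map_add, map_sub, map_smul, smul_eq_mul, hzx', hzy'] at hz1
    simpa using hz1
  · intro hz
    have hzC : z ∈ C := by
      rw [hCdef, Submodule.mem_inf, LinearMap.mem_ker, LinearMap.mem_ker]
      constructor
      · rw [hskew x z, hz]; simp
      · rw [hskew y z, hz]; simp
    refine ⟨⟨z, hzC⟩, ?_, rfl⟩
    ext t
    simp [LinearMap.compl₁₂_apply, hz]

end aux

set_option maxHeartbeats 2000000 in
theorem alt_equiv : ∀ (n : ℕ) {V : Type u} {V' : Type v} [AddCommGroup V] [Module ℝ V]
    [AddCommGroup V'] [Module ℝ V'] [FiniteDimensional ℝ V] [FiniteDimensional ℝ V']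
    (B : V →ₗ[ℝ] V →ₗ[ℝ] ℝ) (B' : V' →ₗ[ℝ] V' →ₗ[ℝ] ℝ),
    (∀ x y, B x y = - B y x) → (∀ x y, B' x y = - B' y x) →
    finrank ℝ V = n → finrank ℝ V' = n →
    finrank ℝ (LinearMap.ker B) = finrank ℝ (LinearMap.ker B') →
    ∃ f : V ≃ₗ[ℝ] V', ∀ x y, B' (f x) (f y) = B x y := by
  intro n
  induction n using Nat.strong_induction_on with
  | _ n ih =>
  intro V V' _ _ _ _ _ _ B B' hB hB' hV hV' hker
  by_cases htop : LinearMap.ker B = ⊤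
  · have htop' : LinearMap.ker B' = ⊤ := by
      apply Submodule.eq_top_of_finrank_eq
      rw [← hker, htop, finrank_top, hV, hV']
    refine ⟨LinearEquiv.ofFinrankEq _ _ (hV.trans hV'.symm), fun x y => ?_⟩
    have h1 : B x = 0 := by
      have : x ∈ LinearMap.ker B := htop ▸ Submodule.mem_top
      exact this
    have h2 : B' (LinearEquiv.ofFinrankEq V V' (hV.trans hV'.symm) x) = 0 := by
      have : (LinearEquiv.ofFinrankEq V V' (hV.trans hV'.symm) x) ∈ LinearMap.ker B' :=
        htop' ▸ Submodule.mem_top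
      exact this
    rw [h1, h2]
    simp
  · -- there exist x y with B x y = 1, similarly for B'
    have htop' : LinearMap.ker B' ≠ ⊤ := by
      intro h
      apply htop
      apply Submodule.eq_top_of_finrank_eq
      rw [hker, h, finrank_top ℝ V', hV, hV']
    obtain ⟨x, y, hxy⟩ := exists_one B htop
    obtain ⟨x', y', hxy'⟩ := exists_one B' htop'
    have hxx : B x x = 0 := by have := hB x x; linarith
    have hyy : B y y = 0 := by have := hB y y; linarith
    have hyx : B y x = -1 := by rw [hB y x, hxy]
    have hxx' : B' x' x' = 0 := by have := hB' x' x'; linarith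
    have hyy' : B' y' y' = 0 := by have := hB' y' y'; linarith
    have hyx' : B' y' x' = -1 := by rw [hB' y' x', hxy']
    have hn : 0 < n := by
      rcases Nat.eq_zero_or_pos n with h0 | h
      · exfalso
        have : Subsingleton V := by
          rw [← finrank_zero_iff (R := ℝ)]; omega
        exact htop (Subsingleton.elim _ _)
      · exact h
    -- the orthogonal complement of the plane
    set C : Submodule ℝ V := LinearMap.ker (B x) ⊓ LinearMap.ker (B y) with hCdef
    set C' : Submodule ℝ V' := LinearMap.ker (B' x') ⊓ LinearMap.ker (B' y') with hC'def
    have hCmem : ∀ z, z ∈ C ↔ B x z = 0 ∧ B y z = 0 := by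
      intro z; simp [hCdef, LinearMap.mem_ker]
    have hC'mem : ∀ z, z ∈ C' ↔ B' x' z = 0 ∧ B' y' z = 0 := by
      intro z; simp [hC'def, LinearMap.mem_ker]
    have hπmem : ∀ v : V, v - (B x v) • y + (B y v) • x ∈ C := by
      intro v
      rw [hCmem]
      constructor
      · simp only [map_add, map_sub, map_smul, smul_eq_mul, hxy, hxx]; ring
      · simp only [map_add, map_sub, map_smul, smul_eq_mul, hyy, hyx]; ring
    have hπ'mem : ∀ v : V', v - (B' x' v) • y' + (B' y' v) • x' ∈ C' := by
      intro v
      rw [hC'mem]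
      constructor
      · simp only [map_add, map_sub, map_smul, smul_eq_mul, hxy', hxx']; ring
      · simp only [map_add, map_sub, map_smul, smul_eq_mul, hyy', hyx']; ring
    -- restricted forms
    set BC := B.compl₁₂ C.subtype C.subtype with hBCdef
    set BC' := B'.compl₁₂ C'.subtype C'.subtype with hBC'def
    have hBCskew : ∀ a b, BC a b = - BC b a := by
      intro a b
      rw [hBCdef]
      simp only [LinearMap.compl₁₂_apply]
      exact hB _ _
    have hBC'skew : ∀ a b, BC' a b = - BC' b a := by
      intro a b
      rw [hBC'def]
      simp only [LinearMap.compl₁₂_apply]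
      exact hB' _ _
    have hrankC : finrank ℝ C = n - 2 := by
      have := finrank_Cplane B x y hB hxy
      rw [hV] at this
      exact this
    have hrankC' : finrank ℝ C' = n - 2 := by
      have := finrank_Cplane B' x' y' hB' hxy'
      rw [hV'] at this
      exact this
    have hkerC : finrank ℝ (LinearMap.ker BC) = finrank ℝ (LinearMap.ker B) := by
      have h1 := ker_map_Cplane B x y hB hxy
      rw [← hCdef] at h1
      rw [← hBCdef] at h1
      rw [← h1, Submodule.finrank_map_subtype_eq]
    have hkerC' : finrank ℝ (LinearMap.ker BC') = finrank ℝ (LinearMap.ker B') := by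
      have h1 := ker_map_Cplane B' x' y' hB' hxy'
      rw [← hC'def] at h1
      rw [← hBC'def] at h1
      rw [← h1, Submodule.finrank_map_subtype_eq]
    obtain ⟨fc, hfc⟩ := ih (n - 2) (by omega) BC BC' hBCskew hBC'skew hrankC hrankC'
      (by rw [hkerC, hkerC']; exact hker)
    -- build the global map
    set πl : V →ₗ[ℝ] V := LinearMap.id - (B x).smulRight y + (B y).smulRight x with hπldef
    have hπl : ∀ v, πl v = v - (B x v) • y + (B y v) • x := by
      intro v
      rw [hπldef]
      simp [LinearMap.sub_apply, LinearMap.add_apply, LinearMap.smulRight_apply]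
    have hπlC : ∀ v, πl v ∈ C := fun v => by rw [hπl]; exact hπmem v
    set πC : V →ₗ[ℝ] C := LinearMap.codRestrict C πl hπlC with hπCdef
    have hπCval : ∀ v, (πC v : V) = πl v := fun v => rfl
    set fl : V →ₗ[ℝ] V' :=
      ((B x).smulRight y') - ((B y).smulRight x') + C'.subtype ∘ₗ (fc : C →ₗ[ℝ] C') ∘ₗ πC
      with hfldef
    have hfl : ∀ v, fl v = (B x v) • y' - (B y v) • x' + ↑(fc (πC v)) := by
      intro v
      rw [hfldef]
      simp [LinearMap.add_apply, LinearMap.sub_apply, LinearMap.smulRight_apply,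
        LinearMap.comp_apply]
    have hC'z : ∀ c' : C', B' x' (c' : V') = 0 ∧ B' y' (c' : V') = 0 := by
      intro c'
      exact (hC'mem _).mp c'.2
    -- injectivity
    have hker0 : LinearMap.ker fl = ⊥ := by
      rw [Submodule.eq_bot_iff]
      intro v hv
      rw [LinearMap.mem_ker] at hv
      have h1 : B x v = 0 := by
        have h := congrArg (B' x') hv
        rw [hfl] at h
        simp only [map_add, map_sub, map_smul, smul_eq_mul, map_zero] at h
        rw [hxy', hxx', (hC'z _).1] at h
        linarith
      have h2 : B y v = 0 := by
        have h := congrArg (B' y') hv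
        rw [hfl] at h
        simp only [map_add, map_sub, map_smul, smul_eq_mul, map_zero] at h
        rw [hyy', hyx', (hC'z _).2] at h
        linarith
      have h3 : (fc (πC v) : V') = 0 := by
        rw [hfl, h1, h2] at hv
        simpa using hv
      have h4 : πC v = 0 := by
        have h5 : fc (πC v) = 0 := by
          exact_mod_cast Submodule.coe_eq_zero.mp h3
        exact fc.map_eq_zero_iff.mp h5
      have h6 : πl v = 0 := by
        rw [← hπCval v, h4]
        rfl
      rw [hπl, h1, h2] at h6
      simpa using h6
    have hinj : Function.Injective fl := LinearMap.ker_eq_bot.mp hker0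
    have hsurj : Function.Surjective fl := by
      rw [← LinearMap.range_eq_top]
      apply Submodule.eq_top_of_finrank_eq
      rw [LinearMap.finrank_range_of_inj hinj, hV, hV']
    refine ⟨LinearEquiv.ofBijective fl ⟨hinj, hsurj⟩, ?_⟩
    intro u v
    show B' (fl u) (fl v) = B u v
    -- facts about π components
    have hπu := (hCmem _).mp (hπlC u)
    have hπv := (hCmem _).mp (hπlC v)
    have hπux : B (πl u) x = 0 := by rw [hB (πl u) x, hπu.1]; ring
    have hπuy : B (πl u) y = 0 := by rw [hB (πl u) y, hπu.2]; ring
    have hcc : B' ↑(fc (πC u)) ↑(fc (πC v)) = B (πl u) (πl v) := by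
      have h := hfc (πC u) (πC v)
      rw [hBC'def, hBCdef] at h
      simp only [LinearMap.compl₁₂_apply] at h
      rw [← hπCval u, ← hπCval v]
      exact h
    -- right-hand side expansion
    have hu2 : u = πl u + (B x u) • y - (B y u) • x := by
      rw [hπl]
      abel
    have hv2 : v = πl v + (B x v) • y - (B y v) • x := by
      rw [hπl]
      abel
    have hBuv : B u v = B (πl u) (πl v) + (B x u) * (B y v) - (B y u) * (B x v) := by
      conv_lhs => rw [hu2, hv2]
      simp only [map_add, map_sub, map_smul, LinearMap.add_apply, LinearMap.sub_apply,
        LinearMap.smul_apply, smul_eq_mul]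
      rw [hπv.1, hπv.2, hπux, hπuy, hxy, hyx, hxx, hyy]
      ring
    -- left-hand side expansion
    have hcu := hC'z (fc (πC u))
    have hcv := hC'z (fc (πC v))
    have hcux : B' ↑(fc (πC u)) x' = 0 := by rw [hB' _ x', hcu.1]; ring
    have hcuy : B' ↑(fc (πC u)) y' = 0 := by rw [hB' _ y', hcu.2]; ring
    rw [hfl u, hfl v, hBuv]
    simp only [map_add, map_sub, map_smul, LinearMap.add_apply, LinearMap.sub_apply,
      LinearMap.smul_apply, smul_eq_mul]
    rw [hxy', hyx', hxx', hyy', hcv.1, hcv.2, hcux, hcuy, hcc]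
    ring

set_option maxHeartbeats 2000000 in
/-- The para-Hermitian group `pH(W)` (the `g`-orthogonal transformations commuting with
`F`) acts transitively on the set of Dirac subspaces `L` of a para-Hermitian space `W`
with prescribed invariants `k = dim(W₋ ∩ L)` and `r = rank(ω|_L)` (equivalently, with
prescribed dimension of `ker(ω|_L) = L ∩ F(L)`, `ω(x,y) = g(Fx,y)`). -/
theorem paraHermitian_group_transitive_on_dirac
    {W : Type*} [AddCommGroup W] [Module ℝ W] [FiniteDimensional ℝ W] (n : ℕ)
    (hdim : finrank ℝ W = 2 * n)
    (g : W →ₗ[ℝ] W →ₗ[ℝ] ℝ)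
    (hsymm : ∀ x y, g x y = g y x)
    (hnondeg : ∀ x, (∀ y, g x y = 0) → x = 0)
    (F : W →ₗ[ℝ] W)
    (hFF : ∀ x, F (F x) = x)
    (hgF : ∀ x y, g (F x) (F y) = - g x y)
    (Wm : Submodule ℝ W)
    (hWm : Wm = LinearMap.ker (F + LinearMap.id))
    (L L' : Submodule ℝ W)
    (hiso : ∀ x ∈ L, ∀ y ∈ L, g x y = 0) (hLdim : finrank ℝ L = n)
    (hiso' : ∀ x ∈ L', ∀ y ∈ L', g x y = 0) (hLdim' : finrank ℝ L' = n)
    -- the invariant `k = dim(W₋ ∩ L)` agrees: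
    (hk : finrank ℝ (Wm ⊓ L : Submodule ℝ W) = finrank ℝ (Wm ⊓ L' : Submodule ℝ W))
    -- the invariant `r = rank(ω|_L) = n − dim ker(ω|_L)` agrees:
    (hr : finrank ℝ (L ⊓ (⨅ y ∈ L, LinearMap.ker ((g.flip y).comp F)) : Submodule ℝ W)
        = finrank ℝ (L' ⊓ (⨅ y ∈ L', LinearMap.ker ((g.flip y).comp F)) : Submodule ℝ W)) :
    ∃ φ : W ≃ₗ[ℝ] W,
      (∀ x y, g (φ x) (φ y) = g x y) ∧
      (∀ x, φ (F x) = F (φ x)) ∧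
      Submodule.map (φ : W →ₗ[ℝ] W) L = L' := by
  classical
  -- eigenspaces and projections
  have hmemWm : ∀ z, z ∈ Wm ↔ F z = -z := by
    intro z
    rw [hWm, LinearMap.mem_ker, LinearMap.add_apply, LinearMap.id_apply]
    exact add_eq_zero_iff_eq_neg
  set Wp : Submodule ℝ W := LinearMap.ker (F - LinearMap.id) with hWpdef
  have hmemWp : ∀ z, z ∈ Wp ↔ F z = z := by
    intro z
    rw [hWpdef, LinearMap.mem_ker, LinearMap.sub_apply, LinearMap.id_apply, sub_eq_zero]
  set pp : W →ₗ[ℝ] W := (2⁻¹ : ℝ) • (LinearMap.id + F) with hppdef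
  set pm : W →ₗ[ℝ] W := (2⁻¹ : ℝ) • (LinearMap.id - F) with hpmdef
  have hppv : ∀ z, pp z = (2⁻¹ : ℝ) • (z + F z) := by
    intro z; rw [hppdef]
    simp [LinearMap.add_apply, LinearMap.smul_apply]
  have hpmv : ∀ z, pm z = (2⁻¹ : ℝ) • (z - F z) := by
    intro z; rw [hpmdef]
    simp [LinearMap.sub_apply, LinearMap.smul_apply]
  have hsum : ∀ z, pp z + pm z = z := by
    intro z; rw [hppv, hpmv]; module
  have hppWp : ∀ z, pp z ∈ Wp := by
    intro z
    rw [hmemWp, hppv, map_smul, map_add, hFF]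
    rw [add_comm]
  have hpmWm : ∀ z, pm z ∈ Wm := by
    intro z
    rw [hmemWm, hpmv, map_smul, map_sub, hFF]
    module
  have hppz : ∀ z, F z = -z → pp z = 0 := by
    intro z h; rw [hppv, h]; module
  have hpmz : ∀ z, F z = z → pm z = 0 := by
    intro z h; rw [hpmv, h]; module
  have hWp_iso : ∀ a b, F a = a → F b = b → g a b = 0 := by
    intro a b ha hb
    have := hgF a b; rw [ha, hb] at this; linarith
  have hWm_iso : ∀ a b, F a = -a → F b = -b → g a b = 0 := by
    intro a b ha hb
    have := hgF a b; rw [ha, hb] at this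
    simp only [map_neg, LinearMap.neg_apply] at this
    linarith
  have hgFskew : ∀ a b, g (F a) b = - g (F b) a := by
    intro a b
    have h1 := hgF a (F b)
    rw [hFF] at h1
    rw [h1, hsymm a (F b)]
  have hcompl : IsCompl Wp Wm := by
    constructor
    · rw [Submodule.disjoint_def]
      intro z hzp hzm
      rw [hmemWp] at hzp
      rw [hmemWm] at hzm
      have h2 : (2:ℝ) • z = 0 := by
        rw [two_smul]
        nth_rewrite 1 [← hzp]
        rw [hzm]; abel
      simpa using (smul_eq_zero.mp h2).resolve_left (by norm_num)
    · rw [codisjoint_iff, eq_top_iff]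
      intro z _
      rw [← hsum z]
      exact Submodule.add_mem_sup (hppWp z) (hpmWm z)
  -- maximal isotropic subspaces are self-orthogonal
  have hperp : ∀ (L₀ : Submodule ℝ W), (∀ a ∈ L₀, ∀ b ∈ L₀, g a b = 0) → finrank ℝ L₀ = n →
      ∀ z, (∀ y ∈ L₀, g z y = 0) → z ∈ L₀ := by
    intro L₀ hiso₀ hdim₀ z hz
    set Bg : LinearMap.BilinForm ℝ W := g with hBgdef
    have hrefl : Bg.IsRefl := by
      intro a b h
      rw [hsymm]; exact h
    have hnd : Bg.Nondegenerate := by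
      refine ⟨fun a ha => ?_, fun a ha => hnondeg a (fun y => (hsymm a y).trans (ha y))⟩
      exact hnondeg a ha
    have horth : L₀ ≤ Bg.orthogonal L₀ := by
      intro a ha
      rw [LinearMap.BilinForm.mem_orthogonal_iff]
      intro b hb
      exact hiso₀ b hb a ha
    have heq : Bg.orthogonal L₀ = L₀ := by
      refine (Submodule.eq_of_le_of_finrank_le horth ?_).symm
      rw [LinearMap.BilinForm.finrank_orthogonal hnd, hdim, hdim₀]
      omega
    rw [← heq, LinearMap.BilinForm.mem_orthogonal_iff]
    intro b hb
    have := hz b hb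
    rw [hsymm] at this
    exact this
  -- choice of a complement of `Wm ⊓ L` inside `L`
  have hSP : ∀ L₀ : Submodule ℝ W, ∃ S : Submodule ℝ W,
      S ≤ L₀ ∧ S ⊓ Wm = ⊥ ∧ S ⊔ (Wm ⊓ L₀) = L₀ := by
    intro L₀
    obtain ⟨T, hT⟩ := Submodule.exists_isCompl ((Wm ⊓ L₀).comap L₀.subtype)
    refine ⟨T.map L₀.subtype, Submodule.map_subtype_le _ _, ?_, ?_⟩
    · rw [eq_bot_iff]
      rintro z hz
      rw [Submodule.mem_inf] at hz
      obtain ⟨⟨t, ht, rfl⟩, hz2⟩ := hz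
      have htJ : t ∈ (Wm ⊓ L₀).comap L₀.subtype := by
        rw [Submodule.mem_comap]
        exact Submodule.mem_inf.mpr ⟨hz2, t.2⟩
      have := Submodule.disjoint_def.mp hT.disjoint t htJ ht
      simp [this]
    · have h1 : ((Wm ⊓ L₀).comap L₀.subtype).map L₀.subtype ⊔ T.map L₀.subtype = L₀ := by
        rw [← Submodule.map_sup, hT.codisjoint.eq_top, Submodule.map_top,
          Submodule.range_subtype]
      rw [Submodule.map_comap_subtype, inf_eq_right.mpr inf_le_right, sup_comm] at h1
      exact h1
  obtain ⟨S, hSL, hSWm, hSsup⟩ := hSP L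
  obtain ⟨S', hSL', hSWm', hSsup'⟩ := hSP L'
  set K : Submodule ℝ W := L ⊓ (⨅ y ∈ L, LinearMap.ker ((g.flip y).comp F)) with hKdef
  set K' : Submodule ℝ W := L' ⊓ (⨅ y ∈ L', LinearMap.ker ((g.flip y).comp F)) with hK'def
  have hKmem : ∀ z, z ∈ K ↔ z ∈ L ∧ ∀ y ∈ L, g (F z) y = 0 := by
    intro z
    rw [hKdef]
    simp [Submodule.mem_inf, Submodule.mem_iInf, LinearMap.mem_ker, LinearMap.comp_apply,
      LinearMap.flip_apply]
  have hK'mem : ∀ z, z ∈ K' ↔ z ∈ L' ∧ ∀ y ∈ L', g (F z) y = 0 := by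
    intro z
    rw [hK'def]
    simp [Submodule.mem_inf, Submodule.mem_iInf, LinearMap.mem_ker, LinearMap.comp_apply,
      LinearMap.flip_apply]
  have hWmLK : ∀ (L₀ K₀ : Submodule ℝ W), (∀ a ∈ L₀, ∀ b ∈ L₀, g a b = 0) →
      (∀ z, z ∈ K₀ ↔ z ∈ L₀ ∧ ∀ y ∈ L₀, g (F z) y = 0) → Wm ⊓ L₀ ≤ K₀ := by
    intro L₀ K₀ hiso₀ hK₀mem z hz
    rw [Submodule.mem_inf] at hz
    rw [hK₀mem]
    refine ⟨hz.2, fun y hy => ?_⟩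
    rw [(hmemWm z).mp hz.1]
    simp only [map_neg, LinearMap.neg_apply]
    simpa using hiso₀ z hz.2 y hy
  have hWmK : Wm ⊓ L ≤ K := hWmLK L K hiso hKmem
  have hWmK' : Wm ⊓ L' ≤ K' := hWmLK L' K' hiso' hK'mem
  have hKsup : (K ⊓ S) ⊔ (Wm ⊓ L) = K := by
    apply le_antisymm
    · exact sup_le inf_le_left hWmK
    · intro z hz
      have hzL : z ∈ L := ((hKmem z).mp hz).1
      rw [← hSsup] at hzL
      obtain ⟨s, hs, w, hw, rfl⟩ := Submodule.mem_sup.mp hzL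
      have hsK : s ∈ K := by
        have heq : s = (s + w) - w := by abel
        rw [heq]
        exact Submodule.sub_mem _ hz (hWmK hw)
      exact Submodule.add_mem_sup (Submodule.mem_inf.mpr ⟨hsK, hs⟩) hw
  have hKsup' : (K' ⊓ S') ⊔ (Wm ⊓ L') = K' := by
    apply le_antisymm
    · exact sup_le inf_le_left hWmK'
    · intro z hz
      have hzL : z ∈ L' := ((hK'mem z).mp hz).1
      rw [← hSsup'] at hzL
      obtain ⟨s, hs, w, hw, rfl⟩ := Submodule.mem_sup.mp hzL
      have hsK : s ∈ K' := by
        have heq : s = (s + w) - w := by abel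
        rw [heq]
        exact Submodule.sub_mem _ hz (hWmK' hw)
      exact Submodule.add_mem_sup (Submodule.mem_inf.mpr ⟨hsK, hs⟩) hw
  -- dimension bookkeeping
  have hdisj1 : S ⊓ (Wm ⊓ L) = ⊥ := by
    rw [eq_bot_iff, ← hSWm]
    intro z hz
    rw [Submodule.mem_inf] at hz ⊢
    exact ⟨hz.1, (Submodule.mem_inf.mp hz.2).1⟩
  have hdisj1' : S' ⊓ (Wm ⊓ L') = ⊥ := by
    rw [eq_bot_iff, ← hSWm']
    intro z hz
    rw [Submodule.mem_inf] at hz ⊢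
    exact ⟨hz.1, (Submodule.mem_inf.mp hz.2).1⟩
  have hfS : finrank ℝ S + finrank ℝ (Wm ⊓ L : Submodule ℝ W) = n := by
    have h := Submodule.finrank_sup_add_finrank_inf_eq S (Wm ⊓ L)
    rw [hSsup, hdisj1, finrank_bot, hLdim] at h
    omega
  have hfS' : finrank ℝ S' + finrank ℝ (Wm ⊓ L' : Submodule ℝ W) = n := by
    have h := Submodule.finrank_sup_add_finrank_inf_eq S' (Wm ⊓ L')
    rw [hSsup', hdisj1', finrank_bot, hLdim'] at h
    omega
  have hdisj2 : (K ⊓ S) ⊓ (Wm ⊓ L) = ⊥ := by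
    rw [eq_bot_iff, ← hSWm]
    intro z hz
    rw [Submodule.mem_inf] at hz ⊢
    exact ⟨(Submodule.mem_inf.mp hz.1).2, (Submodule.mem_inf.mp hz.2).1⟩
  have hdisj2' : (K' ⊓ S') ⊓ (Wm ⊓ L') = ⊥ := by
    rw [eq_bot_iff, ← hSWm']
    intro z hz
    rw [Submodule.mem_inf] at hz ⊢
    exact ⟨(Submodule.mem_inf.mp hz.1).2, (Submodule.mem_inf.mp hz.2).1⟩
  have hfK : finrank ℝ (K ⊓ S : Submodule ℝ W) + finrank ℝ (Wm ⊓ L : Submodule ℝ W)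
      = finrank ℝ K := by
    have h := Submodule.finrank_sup_add_finrank_inf_eq (K ⊓ S) (Wm ⊓ L)
    rw [hKsup, hdisj2, finrank_bot] at h
    omega
  have hfK' : finrank ℝ (K' ⊓ S' : Submodule ℝ W) + finrank ℝ (Wm ⊓ L' : Submodule ℝ W)
      = finrank ℝ K' := by
    have h := Submodule.finrank_sup_add_finrank_inf_eq (K' ⊓ S') (Wm ⊓ L')
    rw [hKsup', hdisj2', finrank_bot] at h
    omega
  -- the restricted forms
  set BS := (g.comp F).compl₁₂ S.subtype S.subtype with hBSdef
  set BS' := (g.comp F).compl₁₂ S'.subtype S'.subtype with hBS'def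
  have hBSapp : ∀ a b : S, BS a b = g (F ↑a) ↑b := by
    intro a b; rw [hBSdef]
    simp [LinearMap.compl₁₂_apply, LinearMap.comp_apply]
  have hBS'app : ∀ a b : S', BS' a b = g (F ↑a) ↑b := by
    intro a b; rw [hBS'def]
    simp [LinearMap.compl₁₂_apply, LinearMap.comp_apply]
  have hBSskew : ∀ a b : S, BS a b = - BS b a := by
    intro a b; rw [hBSapp, hBSapp]; exact hgFskew _ _
  have hBS'skew : ∀ a b : S', BS' a b = - BS' b a := by
    intro a b; rw [hBS'app, hBS'app]; exact hgFskew _ _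
  have hkermap : (LinearMap.ker BS).map S.subtype = K ⊓ S := by
    ext z
    simp only [Submodule.mem_map, LinearMap.mem_ker]
    constructor
    · rintro ⟨⟨z, hzS⟩, hz, rfl⟩
      refine Submodule.mem_inf.mpr ⟨(hKmem z).mpr ⟨hSL hzS, fun y hy => ?_⟩, hzS⟩
      rw [← hSsup] at hy
      obtain ⟨s, hs, w, hw, rfl⟩ := Submodule.mem_sup.mp hy
      have h1 : g (F z) s = 0 := by
        have h := LinearMap.congr_fun hz ⟨s, hs⟩
        rw [hBSapp] at h
        simpa using h
      have h2 : g (F z) w = 0 := by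
        rw [hgFskew, (hmemWm w).mp (Submodule.mem_inf.mp hw).1]
        simp only [map_neg, LinearMap.neg_apply]
        simpa using hiso w (Submodule.mem_inf.mp hw).2 z (hSL hzS)
      rw [map_add, h1, h2, add_zero]
    · rintro hz
      rw [Submodule.mem_inf] at hz
      obtain ⟨hzK, hzS⟩ := hz
      refine ⟨⟨z, hzS⟩, ?_, rfl⟩
      ext t
      rw [hBSapp]
      simpa using ((hKmem z).mp hzK).2 ↑t (hSL t.2)
  have hkermap' : (LinearMap.ker BS').map S'.subtype = K' ⊓ S' := by
    ext z
    simp only [Submodule.mem_map, LinearMap.mem_ker]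
    constructor
    · rintro ⟨⟨z, hzS⟩, hz, rfl⟩
      refine Submodule.mem_inf.mpr ⟨(hK'mem z).mpr ⟨hSL' hzS, fun y hy => ?_⟩, hzS⟩
      rw [← hSsup'] at hy
      obtain ⟨s, hs, w, hw, rfl⟩ := Submodule.mem_sup.mp hy
      have h1 : g (F z) s = 0 := by
        have h := LinearMap.congr_fun hz ⟨s, hs⟩
        rw [hBS'app] at h
        simpa using h
      have h2 : g (F z) w = 0 := by
        rw [hgFskew, (hmemWm w).mp (Submodule.mem_inf.mp hw).1]
        simp only [map_neg, LinearMap.neg_apply]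
        simpa using hiso' w (Submodule.mem_inf.mp hw).2 z (hSL' hzS)
      rw [map_add, h1, h2, add_zero]
    · rintro hz
      rw [Submodule.mem_inf] at hz
      obtain ⟨hzK, hzS⟩ := hz
      refine ⟨⟨z, hzS⟩, ?_, rfl⟩
      ext t
      rw [hBS'app]
      simpa using ((hK'mem z).mp hzK).2 ↑t (hSL' t.2)
  have hrkS : finrank ℝ (LinearMap.ker BS) = finrank ℝ (K ⊓ S : Submodule ℝ W) := by
    rw [← hkermap, Submodule.finrank_map_subtype_eq]
  have hrkS' : finrank ℝ (LinearMap.ker BS') = finrank ℝ (K' ⊓ S' : Submodule ℝ W) := by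
    rw [← hkermap', Submodule.finrank_map_subtype_eq]
  -- apply the classification of alternating forms
  obtain ⟨f, hf⟩ := alt_equiv (finrank ℝ S) BS BS' hBSskew hBS'skew rfl
    (by omega) (by omega)
  -- duality between `Wp` and `Wm`
  have hWp_iso' : ∀ a ∈ Wp, ∀ b ∈ Wp, g a b = 0 := fun a ha b hb =>
    hWp_iso a b ((hmemWp a).mp ha) ((hmemWp b).mp hb)
  have hWm_iso' : ∀ a ∈ Wm, ∀ b ∈ Wm, g a b = 0 := fun a ha b hb =>
    hWm_iso a b ((hmemWm a).mp ha) ((hmemWm b).mp hb)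
  have hdual : ∀ (P Q : Submodule ℝ W), (∀ a ∈ P, ∀ b ∈ P, g a b = 0) → P ⊔ Q = ⊤ →
      Function.Injective (g.compl₁₂ P.subtype Q.subtype) := by
    intro P Q hisoP hsupPQ
    rw [← LinearMap.ker_eq_bot, Submodule.eq_bot_iff]
    intro a ha
    rw [LinearMap.mem_ker] at ha
    have hz : ∀ w, g ↑a w = 0 := by
      intro w
      have hw : w ∈ P ⊔ Q := hsupPQ ▸ Submodule.mem_top
      obtain ⟨p, hp, q, hq, rfl⟩ := Submodule.mem_sup.mp hw
      have h1 : g ↑a p = 0 := hisoP ↑a a.2 p hp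
      have h2 : g ↑a q = 0 := by
        have h3 := LinearMap.congr_fun ha ⟨q, hq⟩
        simpa [LinearMap.compl₁₂_apply] using h3
      rw [map_add, h1, h2, add_zero]
    exact Subtype.ext (hnondeg ↑a hz)
  have hc1 : Wp ⊔ Wm = ⊤ := hcompl.codisjoint.eq_top
  have hc2 : Wm ⊔ Wp = ⊤ := by rw [sup_comm]; exact hc1
  have hinjΨ := hdual Wm Wp hWm_iso' hc2
  have hinjΦ := hdual Wp Wm hWp_iso' hc1
  have hfrank : finrank ℝ Wp = finrank ℝ Wm := by
    have h1 : finrank ℝ Wm ≤ finrank ℝ (Module.Dual ℝ Wp) :=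
      LinearMap.finrank_le_finrank_of_injective hinjΨ
    have h2 : finrank ℝ Wp ≤ finrank ℝ (Module.Dual ℝ Wm) :=
      LinearMap.finrank_le_finrank_of_injective hinjΦ
    rw [Subspace.dual_finrank_eq] at h1 h2
    omega
  have hsurjΨ : Function.Surjective (g.compl₁₂ Wm.subtype Wp.subtype) := by
    rw [← LinearMap.range_eq_top]
    apply Submodule.eq_top_of_finrank_eq
    rw [LinearMap.finrank_range_of_inj hinjΨ, Subspace.dual_finrank_eq, hfrank]
  set ΨE := LinearEquiv.ofBijective (g.compl₁₂ Wm.subtype Wp.subtype) ⟨hinjΨ, hsurjΨ⟩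
    with hΨEdef
  -- the maps from `S`, `S'` to `Wp`
  set jm : S →ₗ[ℝ] Wp := LinearMap.codRestrict Wp (pp ∘ₗ S.subtype) (fun s => hppWp _)
    with hjmdef
  set jm' : S' →ₗ[ℝ] Wp := LinearMap.codRestrict Wp (pp ∘ₗ S'.subtype) (fun s => hppWp _)
    with hjm'def
  have hjmval : ∀ s : S, (jm s : W) = pp ↑s := fun s => rfl
  have hjm'val : ∀ s : S', (jm' s : W) = pp ↑s := fun s => rfl
  have hppker : ∀ z, pp z = 0 → F z = -z := by
    intro z h
    rw [hppv] at h
    have h2 : z + F z = 0 := by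
      rcases smul_eq_zero.mp h with h | h
      · norm_num at h
      · exact h
    exact eq_neg_of_add_eq_zero_right h2
  have hjminjgen : ∀ (S₀ : Submodule ℝ W), S₀ ⊓ Wm = ⊥ →
      ∀ (j₀ : S₀ →ₗ[ℝ] Wp), (∀ s : S₀, (j₀ s : W) = pp ↑s) → Function.Injective j₀ := by
    intro S₀ hS₀ j₀ hj₀ a b hab
    have h : pp (↑a - ↑b : W) = 0 := by
      rw [map_sub, sub_eq_zero]
      have h4 := congrArg Subtype.val hab
      rw [hj₀, hj₀] at h4
      exact h4
    have hWmem : (↑a - ↑b : W) ∈ Wm := (hmemWm _).mpr (hppker _ h)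
    have hSmem : (↑a - ↑b : W) ∈ S₀ := Submodule.sub_mem _ a.2 b.2
    have hmem : (↑a - ↑b : W) ∈ S₀ ⊓ Wm := Submodule.mem_inf.mpr ⟨hSmem, hWmem⟩
    rw [hS₀, Submodule.mem_bot] at hmem
    exact Subtype.ext (sub_eq_zero.mp hmem)
  have hjminj : Function.Injective jm := hjminjgen S hSWm jm hjmval
  have hjm'inj : Function.Injective jm' := hjminjgen S' hSWm' jm' hjm'val
  -- the automorphism `A` of `Wp`
  obtain ⟨CE, hCE⟩ := Submodule.exists_isCompl (LinearMap.range jm)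
  obtain ⟨CE', hCE'⟩ := Submodule.exists_isCompl (LinearMap.range jm')
  set isoE : (LinearMap.range jm : Submodule ℝ Wp) ≃ₗ[ℝ] (LinearMap.range jm' : Submodule ℝ Wp) :=
    ((LinearEquiv.ofInjective jm hjminj).symm.trans f).trans
      (LinearEquiv.ofInjective jm' hjm'inj) with hisoEdef
  have hfinE : finrank ℝ (LinearMap.range jm' : Submodule ℝ Wp)
      = finrank ℝ (LinearMap.range jm : Submodule ℝ Wp) := by
    have := LinearEquiv.finrank_eq isoE
    omega
  have hfinC : finrank ℝ CE = finrank ℝ CE' := by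
    have h1 := Submodule.finrank_add_eq_of_isCompl hCE
    have h2 := Submodule.finrank_add_eq_of_isCompl hCE'
    omega
  set A : Wp ≃ₗ[ℝ] Wp :=
    ((Submodule.prodEquivOfIsCompl _ CE hCE).symm.trans
      (isoE.prodCongr (LinearEquiv.ofFinrankEq _ _ hfinC))).trans
      (Submodule.prodEquivOfIsCompl _ CE' hCE') with hAdef
  have hAE : ∀ e : (LinearMap.range jm : Submodule ℝ Wp), A ↑e = ↑(isoE e) := by
    intro e
    rw [hAdef]
    simp only [LinearEquiv.trans_apply, Submodule.prodEquivOfIsCompl_symm_apply_left,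
      LinearEquiv.prodCongr_apply, map_zero, Submodule.coe_prodEquivOfIsCompl']
    simp
  have hAj : ∀ s : S, A (jm s) = jm' (f s) := by
    intro s
    have h1 : jm s = ↑(LinearEquiv.ofInjective jm hjminj s) := by
      rw [LinearEquiv.ofInjective_apply]
    rw [h1, hAE, hisoEdef]
    simp only [LinearEquiv.trans_apply, LinearEquiv.symm_apply_apply]
    rw [LinearEquiv.ofInjective_apply]
  have hAj' : ∀ s' : S', A.symm (jm' s') = jm (f.symm s') := by
    intro s'
    rw [LinearEquiv.symm_apply_eq, hAj, LinearEquiv.apply_symm_apply]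
  -- the induced automorphism of `Wm`
  set Bm : Wm ≃ₗ[ℝ] Wm := (ΨE.trans A.symm.dualMap).trans ΨE.symm with hBmdef
  have hBmval : ∀ (m : Wm) (e : Wp), g ↑(Bm m) ↑e = g ↑m ↑(A.symm e) := by
    intro m e
    have h1 : (g.compl₁₂ Wm.subtype Wp.subtype) (Bm m) = A.symm.dualMap (ΨE m) := by
      rw [hBmdef]
      simp only [LinearEquiv.trans_apply]
      exact ΨE.apply_symm_apply _
    have h2 := LinearMap.congr_fun h1 e
    rw [LinearMap.compl₁₂_apply] at h2
    simp only [Submodule.coe_subtype] at h2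
    rw [h2, LinearEquiv.dualMap_apply]
    rfl
  have hBmA : ∀ (m : Wm) (e : Wp), g ↑(Bm m) ↑(A e) = g ↑m ↑e := by
    intro m e
    rw [hBmval, LinearEquiv.symm_apply_apply]
  -- the global map `φ`
  set P := Submodule.prodEquivOfIsCompl Wp Wm hcompl with hPdef
  set φ : W ≃ₗ[ℝ] W := (P.symm.trans (A.prodCongr Bm)).trans P with hφdef
  have hφval : ∀ (e : Wp) (m : Wm), φ (↑e + ↑m) = ↑(A e) + ↑(Bm m) := by
    intro e m
    rw [hφdef]
    simp only [LinearEquiv.trans_apply]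
    have h1 : P.symm (↑e + ↑m) = (e, m) := by
      rw [LinearEquiv.symm_apply_eq, hPdef, Submodule.coe_prodEquivOfIsCompl']
    rw [h1, LinearEquiv.prodCongr_apply, hPdef, Submodule.coe_prodEquivOfIsCompl']
  have hdecomp : ∀ z : W, z = ↑(⟨pp z, hppWp z⟩ : Wp) + ↑(⟨pm z, hpmWm z⟩ : Wm) := by
    intro z
    exact (hsum z).symm
  have hFa : ∀ e : Wp, F ↑e = ↑e := fun e => (hmemWp _).mp e.2
  have hFm : ∀ m : Wm, F ↑m = -↑m := fun m => (hmemWm _).mp m.2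
  -- the cross term lemma
  have hcross : ∀ (L₀ : Submodule ℝ W), (∀ a ∈ L₀, ∀ b ∈ L₀, g a b = 0) →
      ∀ u ∈ L₀, ∀ t ∈ L₀, g (pm u) (pp t) = -(2⁻¹ : ℝ) * g (F u) t := by
    intro L₀ hiso₀ u hu t ht
    have hFu : F u = pp u - pm u := by
      rw [hppv, hpmv]
      module
    have ht2 : t = pp t + pm t := (hsum t).symm
    have e1 : g (pp u) (pp t) = 0 :=
      hWp_iso _ _ ((hmemWp _).mp (hppWp u)) ((hmemWp _).mp (hppWp t))
    have e2 : g (pm u) (pm t) = 0 :=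
      hWm_iso _ _ ((hmemWm _).mp (hpmWm u)) ((hmemWm _).mp (hpmWm t))
    have e3 : g u t = 0 := hiso₀ u hu t ht
    have e4 : g (pp u) (pp t) + g (pp u) (pm t) + (g (pm u) (pp t) + g (pm u) (pm t)) = 0 := by
      have h5 : g (pp u + pm u) (pp t + pm t) = 0 := by
        rw [hsum u, hsum t]
        exact e3
      simp only [map_add, LinearMap.add_apply] at h5
      linarith
    have e5 : g (F u) t = g (pp u) (pp t) + g (pp u) (pm t)
        - (g (pm u) (pp t) + g (pm u) (pm t)) := by
      rw [hFu]
      conv_lhs => rw [ht2]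
      simp only [map_sub, map_add, LinearMap.sub_apply, LinearMap.add_apply]
      ring
    rw [e1, e2] at e4 e5
    linarith
  refine ⟨φ, ?_, ?_, ?_⟩
  · -- orthogonality
    intro u v
    have h1 : φ u = ↑(A ⟨pp u, hppWp u⟩) + ↑(Bm ⟨pm u, hpmWm u⟩) := by
      conv_lhs => rw [hdecomp u]
      exact hφval _ _
    have h2 : φ v = ↑(A ⟨pp v, hppWp v⟩) + ↑(Bm ⟨pm v, hpmWm v⟩) := by
      conv_lhs => rw [hdecomp v]
      exact hφval _ _
    have t1 : g ↑(A ⟨pp u, hppWp u⟩) ↑(A ⟨pp v, hppWp v⟩) = 0 :=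
      hWp_iso _ _ (hFa _) (hFa _)
    have t4 : g ↑(Bm ⟨pm u, hpmWm u⟩) ↑(Bm ⟨pm v, hpmWm v⟩) = 0 :=
      hWm_iso _ _ (hFm _) (hFm _)
    have t2 : g ↑(A ⟨pp u, hppWp u⟩) ↑(Bm ⟨pm v, hpmWm v⟩)
        = g (↑(⟨pp u, hppWp u⟩ : Wp)) (↑(⟨pm v, hpmWm v⟩ : Wm)) := by
      rw [hsymm, hBmA, hsymm]
    have t3 : g ↑(Bm ⟨pm u, hpmWm u⟩) ↑(A ⟨pp v, hppWp v⟩)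
        = g (↑(⟨pm u, hpmWm u⟩ : Wm)) (↑(⟨pp v, hppWp v⟩ : Wp)) := hBmA _ _
    have t5 : g (↑(⟨pp u, hppWp u⟩ : Wp)) (↑(⟨pp v, hppWp v⟩ : Wp)) = 0 :=
      hWp_iso _ _ (hFa _) (hFa _)
    have t6 : g (↑(⟨pm u, hpmWm u⟩ : Wm)) (↑(⟨pm v, hpmWm v⟩ : Wm)) = 0 :=
      hWm_iso _ _ (hFm _) (hFm _)
    rw [h1, h2]
    conv_rhs => rw [hdecomp u, hdecomp v]
    simp only [map_add, LinearMap.add_apply]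
    rw [t1, t2, t3, t4, t5, t6]
  · -- commuting with F
    intro z
    have h1 : F z = ↑(⟨pp z, hppWp z⟩ : Wp) + ↑(-(⟨pm z, hpmWm z⟩ : Wm)) := by
      have h2 : F z = pp z - pm z := by
        rw [hppv, hpmv]
        module
      rw [h2]
      exact sub_eq_add_neg _ _
    rw [h1, hφval]
    conv_rhs => rw [hdecomp z, hφval]
    rw [map_add, hFa, hFm]
    simp only [map_neg, Submodule.coe_neg]
  · -- mapping L to L'
    have hsub : ∀ z ∈ L, φ z ∈ L' := by
      intro z hz
      apply hperp L' hiso' hLdim'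
      intro y hy
      have hzL := hz
      rw [← hSsup] at hzL
      obtain ⟨s, hs, w, hw, hzeq⟩ := Submodule.mem_sup.mp hzL
      have hyL := hy
      rw [← hSsup'] at hyL
      obtain ⟨s', hs', w', hw', hyeq⟩ := Submodule.mem_sup.mp hyL
      have hwWm : w ∈ Wm := (Submodule.mem_inf.mp hw).1
      have hwL : w ∈ L := (Submodule.mem_inf.mp hw).2
      have hw'Wm : w' ∈ Wm := (Submodule.mem_inf.mp hw').1
      have hw'L : w' ∈ L' := (Submodule.mem_inf.mp hw').2
      -- identify the Wp components
      have hez : (⟨pp z, hppWp z⟩ : Wp) = jm ⟨s, hs⟩ := by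
        apply Subtype.ext
        rw [hjmval]
        have : pp z = pp s := by
          rw [← hzeq, map_add, hppz w ((hmemWm w).mp hwWm), add_zero]
        exact this
      have hey : (⟨pp y, hppWp y⟩ : Wp) = jm' ⟨s', hs'⟩ := by
        apply Subtype.ext
        rw [hjm'val]
        have : pp y = pp s' := by
          rw [← hyeq, map_add, hppz w' ((hmemWm w').mp hw'Wm), add_zero]
        exact this
      have h1 : φ z = ↑(A ⟨pp z, hppWp z⟩) + ↑(Bm ⟨pm z, hpmWm z⟩) := by
        conv_lhs => rw [hdecomp z]
        exact hφval _ _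
      rw [h1, map_add, LinearMap.add_apply]
      have hterm1 : g ↑(A ⟨pp z, hppWp z⟩) y = g (pm y) (pp ↑(f ⟨s, hs⟩)) := by
        conv_lhs => rw [hdecomp y]
        rw [map_add, hWp_iso _ _ (hFa (A _)) (hFa _), zero_add]
        rw [hsymm, hez, hAj]
        rfl
      have hterm2 : g ↑(Bm ⟨pm z, hpmWm z⟩) y = g (pm z) (pp ↑(f.symm ⟨s', hs'⟩)) := by
        conv_lhs => rw [hdecomp y]
        rw [map_add, hWm_iso _ _ (hFm (Bm _)) (hFm _), add_zero]
        rw [hBmval, hey, hAj']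
        rfl
      rw [hterm1, hterm2]
      have hfσL' : (↑(f ⟨s, hs⟩) : W) ∈ L' := hSL' (f ⟨s, hs⟩).2
      have hfσ'L : (↑(f.symm ⟨s', hs'⟩) : W) ∈ L := hSL (f.symm ⟨s', hs'⟩).2
      rw [hcross L' hiso' y hy _ hfσL', hcross L hiso z hz _ hfσ'L]
      have hy3 : g (F y) ↑(f ⟨s, hs⟩) = BS' ⟨s', hs'⟩ (f ⟨s, hs⟩) := by
        conv_lhs => rw [← hyeq]
        rw [map_add, map_add, LinearMap.add_apply]
        have hw'0 : g (F w') ↑(f ⟨s, hs⟩) = 0 := by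
          rw [(hmemWm w').mp hw'Wm]
          simp only [map_neg, LinearMap.neg_apply]
          simpa using hiso' w' hw'L _ hfσL'
        rw [hw'0, add_zero, hBS'app]
      have hz3 : g (F z) ↑(f.symm ⟨s', hs'⟩) = BS ⟨s, hs⟩ (f.symm ⟨s', hs'⟩) := by
        conv_lhs => rw [← hzeq]
        rw [map_add, map_add, LinearMap.add_apply]
        have hw0 : g (F w) ↑(f.symm ⟨s', hs'⟩) = 0 := by
          rw [(hmemWm w).mp hwWm]
          simp only [map_neg, LinearMap.neg_apply]
          simpa using hiso w hwL _ hfσ'L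
        rw [hw0, add_zero, hBSapp]
      rw [hy3, hz3]
      have hff := hf ⟨s, hs⟩ (f.symm ⟨s', hs'⟩)
      rw [LinearEquiv.apply_symm_apply] at hff
      have hskw := hBS'skew ⟨s', hs'⟩ (f ⟨s, hs⟩)
      linarith [hff, hskw]
    apply Submodule.eq_of_le_of_finrank_le
    · rintro _ ⟨z, hz, rfl⟩
      exact hsub z hz
    · rw [LinearEquiv.finrank_map_eq, hLdim, hLdim']
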